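/- Under the GCN training assumptions (activation $C_\sigma$-Lipschitz with $\sigma(0)=0$, spectral norms $\|W_t^{(l)}\| \leq C_\theta$, total gradient norm $\leq C_g$, learning rate $\alpha_t = 1/t$, edge weights bounded by $\bar{A}$, degree bounded by $\bar{D}$, input aggregate bound $C_x$), the expected reward sequence $\mathbb{E}[\tilde{r}_{i,t}]$ of the clipped reward $\tilde{r}_{i,t} = \mathrm{ReLU}(2\langle z_{i,t}^{(l)}, \bar{z}_t\rangle - \|z_{i,t}^{(l)}\|^2)$ satisfies for all $T \geq 2$: $\sum_{t=1}^{T} |\mathbb{E}[\tilde{r}_{i,t+1}] - \mathbb{E}[\tilde{r}_{i,t}]| \leq 12\, G^{2(l-1)} C_\sigma^2 C_x^2 \bar{A}^2 C_\theta C_g \ln T$, where $G = C_\sigma C_\theta \bar{A}\bar{D}$. -/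

import Mathlib

open Finset

lemma relu_diff_le {E : Type*} [NormedAddCommGroup E] [InnerProductSpace ℝ E]
    {C δ : ℝ} (hC : 0 ≤ C) (hδ : 0 ≤ δ) (u v x w : E)
    (hu : ‖u‖ ≤ C) (hv : ‖v‖ ≤ C) (hx : ‖x‖ ≤ C) (hw : ‖w‖ ≤ C)
    (hp : ‖x - u‖ ≤ δ) (hq : ‖w - v‖ ≤ δ) :
    max (2 * (inner ℝ u v : ℝ) - ‖u‖ ^ 2) 0 - max (2 * (inner ℝ x w : ℝ) - ‖x‖ ^ 2) 0
      ≤ 4 * C * δ := by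
  set a : ℝ := 2 * (inner ℝ u v : ℝ) - ‖u‖ ^ 2 with ha
  set b : ℝ := 2 * (inner ℝ x w : ℝ) - ‖x‖ ^ 2 with hb
  have h4 : 0 ≤ 4 * C * δ := by positivity
  rcases le_or_gt a (4 * C * δ) with h | h
  · have : max a 0 ≤ 4 * C * δ := max_le h h4
    have : (0:ℝ) ≤ max b 0 := le_max_right _ _
    linarith
  · have hid : a = ‖v‖ ^ 2 - ‖u - v‖ ^ 2 := by
      have := norm_sub_sq_real u v
      rw [ha]; linarith
    have huv2 : ‖u - v‖ ^ 2 < C ^ 2 - 4 * C * δ := by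
      nlinarith [norm_nonneg v, hv]
    have hCpos : 2 * δ ≤ C := by nlinarith [norm_nonneg (u - v), sq_nonneg (‖u-v‖)]
    have huv : ‖u - v‖ ≤ C - 2 * δ := by
      nlinarith [norm_nonneg (u - v)]
    have hexp : a - b
        = -(2 * (inner ℝ u (w - v) : ℝ)) - 2 * (inner ℝ (x - u) (v - u) : ℝ)
          - 2 * (inner ℝ (x - u) (w - v) : ℝ) + ‖x - u‖ ^ 2 := by
      rw [ha, hb, ← real_inner_self_eq_norm_sq u, ← real_inner_self_eq_norm_sq x,
        ← real_inner_self_eq_norm_sq (x - u)]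
      simp only [inner_sub_left, inner_sub_right]
      rw [real_inner_comm x u, real_inner_comm w u, real_inner_comm v x, real_inner_comm v u]
      ring
    have b1 : |(inner ℝ u (w - v) : ℝ)| ≤ C * δ :=
      (abs_real_inner_le_norm u (w-v)).trans (mul_le_mul hu hq (norm_nonneg _) hC)
    have b2 : |(inner ℝ (x - u) (v - u) : ℝ)| ≤ δ * (C - 2*δ) :=
      (abs_real_inner_le_norm _ _).trans
        (mul_le_mul hp (by rwa [norm_sub_rev]) (norm_nonneg _) hδ)
    have b3 : |(inner ℝ (x - u) (w - v) : ℝ)| ≤ δ * δ :=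
      (abs_real_inner_le_norm _ _).trans (mul_le_mul hp hq (norm_nonneg _) hδ)
    have b4 : ‖x - u‖ ^ 2 ≤ δ ^ 2 := by nlinarith [norm_nonneg (x - u)]
    have hab : a - b ≤ 4 * C * δ := by
      rw [hexp]
      have := abs_le.mp b1
      have := abs_le.mp b2
      have := abs_le.mp b3
      nlinarith
    have hmaxa : max a 0 = a := max_eq_left (by linarith)
    have : b ≤ max b 0 := le_max_left _ _
    linarith

theorem stmt18 {d : ℕ} {Ω : Type*} [Fintype Ω]
    (P : Ω → ℝ) (hP0 : ∀ ω, 0 ≤ P ω) (hP1 : ∑ ω, P ω = 1)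
    (l : ℕ) (hl : 1 ≤ l)
    (Cσ Cθ Abar Dbar Cx Cg : ℝ)
    (hCσ : 0 ≤ Cσ) (hCθ : 0 ≤ Cθ) (hA : 0 ≤ Abar) (hD : 0 ≤ Dbar)
    (hCx : 0 ≤ Cx) (hCg : 0 ≤ Cg)
    (z zbar : ℕ → Ω → EuclideanSpace ℝ (Fin d))
    (hzb : ∀ t ω, ‖z t ω‖ ≤ (Cσ * Cθ * Abar * Dbar) ^ (l - 1) * Abar * Cσ * Cθ * Cx)
    (hzbarb : ∀ t ω, ‖zbar t ω‖ ≤ (Cσ * Cθ * Abar * Dbar) ^ (l - 1) * Abar * Cσ * Cθ * Cx)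
    (hdz : ∀ t ω, 1 ≤ t →
      ‖z (t + 1) ω - z t ω‖
        ≤ (1 / (t : ℝ)) * (Cσ * Cθ * Abar * Dbar) ^ (l - 1) * Abar * Cσ * Cx * Cg)
    (hdzbar : ∀ t ω, 1 ≤ t →
      ‖zbar (t + 1) ω - zbar t ω‖
        ≤ (1 / (t : ℝ)) * (Cσ * Cθ * Abar * Dbar) ^ (l - 1) * Abar * Cσ * Cx * Cg)
    (T : ℕ) (hT : 2 ≤ T) :
    ∑ t ∈ Finset.Icc 1 T,
        |(∑ ω, P ω *
            max (2 * (inner ℝ (z (t + 1) ω) (zbar (t + 1) ω) : ℝ) - ‖z (t + 1) ω‖ ^ 2) 0)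
          - (∑ ω, P ω *
            max (2 * (inner ℝ (z t ω) (zbar t ω) : ℝ) - ‖z t ω‖ ^ 2) 0)|
      ≤ 12 * (Cσ * Cθ * Abar * Dbar) ^ (2 * (l - 1)) * Cσ ^ 2 * Cx ^ 2
          * Abar ^ 2 * Cθ * Cg * Real.log T := by
  set G : ℝ := Cσ * Cθ * Abar * Dbar with hG
  have hGn : 0 ≤ G ^ (l - 1) := by positivity
  set C : ℝ := G ^ (l - 1) * Abar * Cσ * Cθ * Cx with hCdef
  set Δ : ℝ := G ^ (l - 1) * Abar * Cσ * Cx * Cg with hΔ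
  have hC : 0 ≤ C := by positivity
  have hΔ0 : 0 ≤ Δ := by positivity
  -- per-step bound
  have step : ∀ t ∈ Finset.Icc 1 T,
      |(∑ ω, P ω *
          max (2 * (inner ℝ (z (t + 1) ω) (zbar (t + 1) ω) : ℝ) - ‖z (t + 1) ω‖ ^ 2) 0)
        - (∑ ω, P ω *
          max (2 * (inner ℝ (z t ω) (zbar t ω) : ℝ) - ‖z t ω‖ ^ 2) 0)|
        ≤ (1 / (t : ℝ)) * (4 * C * Δ) := by
    intro t ht
    obtain ⟨ht1, -⟩ := Finset.mem_Icc.mp ht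
    have htpos : (0:ℝ) < t := by exact_mod_cast ht1
    have hinv : (0:ℝ) ≤ 1 / t := by positivity
    set δ : ℝ := (1 / (t : ℝ)) * Δ with hδdef
    have hδ0 : 0 ≤ δ := by positivity
    have pointwise : ∀ ω,
        |max (2 * (inner ℝ (z (t + 1) ω) (zbar (t + 1) ω) : ℝ) - ‖z (t + 1) ω‖ ^ 2) 0
          - max (2 * (inner ℝ (z t ω) (zbar t ω) : ℝ) - ‖z t ω‖ ^ 2) 0| ≤ 4 * C * δ := by
      intro ω
      have hd1 : ‖z (t+1) ω - z t ω‖ ≤ δ := by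
        have := hdz t ω ht1
        rw [hδdef, hΔ]; ring_nf; ring_nf at this; linarith
      have hd2 : ‖zbar (t+1) ω - zbar t ω‖ ≤ δ := by
        have := hdzbar t ω ht1
        rw [hδdef, hΔ]; ring_nf; ring_nf at this; linarith
      have hd1' : ‖z t ω - z (t+1) ω‖ ≤ δ := by rwa [norm_sub_rev]
      have hd2' : ‖zbar t ω - zbar (t+1) ω‖ ≤ δ := by rwa [norm_sub_rev]
      rw [abs_le]
      constructor
      · have := relu_diff_le hC hδ0 (z t ω) (zbar t ω) (z (t+1) ω) (zbar (t+1) ω)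
          (hzb t ω) (hzbarb t ω) (hzb (t+1) ω) (hzbarb (t+1) ω) hd1 hd2
        linarith
      · exact relu_diff_le hC hδ0 (z (t+1) ω) (zbar (t+1) ω) (z t ω) (zbar t ω)
          (hzb (t+1) ω) (hzbarb (t+1) ω) (hzb t ω) (hzbarb t ω) hd1' hd2'
    calc |(∑ ω, P ω *
          max (2 * (inner ℝ (z (t + 1) ω) (zbar (t + 1) ω) : ℝ) - ‖z (t + 1) ω‖ ^ 2) 0)
        - (∑ ω, P ω *
          max (2 * (inner ℝ (z t ω) (zbar t ω) : ℝ) - ‖z t ω‖ ^ 2) 0)|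
        = |∑ ω, P ω *
            (max (2 * (inner ℝ (z (t + 1) ω) (zbar (t + 1) ω) : ℝ) - ‖z (t + 1) ω‖ ^ 2) 0
            - max (2 * (inner ℝ (z t ω) (zbar t ω) : ℝ) - ‖z t ω‖ ^ 2) 0)| := by
          rw [← Finset.sum_sub_distrib]; congr 1; apply Finset.sum_congr rfl; intro ω _; ring
      _ ≤ ∑ ω, |P ω *
            (max (2 * (inner ℝ (z (t + 1) ω) (zbar (t + 1) ω) : ℝ) - ‖z (t + 1) ω‖ ^ 2) 0
            - max (2 * (inner ℝ (z t ω) (zbar t ω) : ℝ) - ‖z t ω‖ ^ 2) 0)| :=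
          Finset.abs_sum_le_sum_abs _ _
      _ ≤ ∑ ω : Ω, P ω * (4 * C * δ) := by
          apply Finset.sum_le_sum
          intro ω _
          rw [abs_mul, abs_of_nonneg (hP0 ω)]
          exact mul_le_mul_of_nonneg_left (pointwise ω) (hP0 ω)
      _ = 4 * C * δ := by rw [← Finset.sum_mul, hP1, one_mul]
      _ = (1 / (t : ℝ)) * (4 * C * Δ) := by rw [hδdef]; ring
  have hsum := Finset.sum_le_sum step
  have hharm : ∑ t ∈ Finset.Icc 1 T, (1 / (t : ℝ)) * (4 * C * Δ)
      = (4 * C * Δ) * ∑ t ∈ Finset.Icc 1 T, (1 / (t : ℝ)) := by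
    rw [Finset.mul_sum]; apply Finset.sum_congr rfl; intro t _; ring
  have hH : ∑ t ∈ Finset.Icc 1 T, (1 / (t : ℝ)) ≤ 1 + Real.log T := by
    have h1 : ((harmonic T : ℚ) : ℝ) = ∑ t ∈ Finset.Icc 1 T, (1 / (t : ℝ)) := by
      rw [harmonic_eq_sum_Icc]
      push_cast
      simp [one_div]
    rw [← h1]
    exact harmonic_le_one_add_log T
  have hlog2 : (1:ℝ)/2 ≤ Real.log T := by
    have h2 : Real.log 2 ≤ Real.log T := by
      apply Real.log_le_log (by norm_num)
      exact_mod_cast hT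
    have := Real.log_two_gt_d9
    linarith
  have hfinal : (4 * C * Δ) * (1 + Real.log T) ≤ 12 * C * Δ * Real.log T := by
    have hCΔ : 0 ≤ C * Δ := mul_nonneg hC hΔ0
    nlinarith
  have hcoef : 12 * C * Δ * Real.log T
      = 12 * G ^ (2 * (l - 1)) * Cσ ^ 2 * Cx ^ 2 * Abar ^ 2 * Cθ * Cg * Real.log T := by
    rw [hCdef, hΔ, two_mul, pow_add]; ring
  calc ∑ t ∈ Finset.Icc 1 T,
        |(∑ ω, P ω *
            max (2 * (inner ℝ (z (t + 1) ω) (zbar (t + 1) ω) : ℝ) - ‖z (t + 1) ω‖ ^ 2) 0)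
          - (∑ ω, P ω *
            max (2 * (inner ℝ (z t ω) (zbar t ω) : ℝ) - ‖z t ω‖ ^ 2) 0)|
      ≤ ∑ t ∈ Finset.Icc 1 T, (1 / (t : ℝ)) * (4 * C * Δ) := hsum
    _ = (4 * C * Δ) * ∑ t ∈ Finset.Icc 1 T, (1 / (t : ℝ)) := hharm
    _ ≤ (4 * C * Δ) * (1 + Real.log T) := by
        apply mul_le_mul_of_nonneg_left hH (by positivity)
    _ ≤ 12 * C * Δ * Real.log T := hfinal
    _ = _ := hcoef
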